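/- Key inequality for non-separability: if S = Σ_j A_j⊗B_j with A_j, B_j positive operators on ℂ², and T is a self-adjoint operator on ℂ²⊗ℂ² with T(ξ1⊗ξ2) = 0, T(ξ2⊗ξ1) = 0, and ⟨ξ2⊗ξ2, T ξ1⊗ξ1⟩ = α > 0 real, then ‖T − S‖ ≥ α/2. Consequently T is not in the norm closure of separable positive operators. -/

import Mathlib

open Matrix Kronecker
open scoped ComplexOrder

/-- Partial trace over the first tensor factor. -/
noncomputable def ptrace1 {n m : ℕ} (M : Matrix (Fin n × Fin m) (Fin n × Fin m) ℂ) :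
    Matrix (Fin m) (Fin m) ℂ :=
  fun j i => ∑ k : Fin n, M (k, j) (k, i)

/-- Tensor product of vectors. -/
noncomputable def vecTens {n m : ℕ} (x : Fin n → ℂ) (y : Fin m → ℂ) : Fin n × Fin m → ℂ :=
  fun p => x p.1 * y p.2

/-- Rank-one operator `|y⟩⟨z|`. -/
noncomputable def ketbra {d : Type*} (y z : d → ℂ) : Matrix d d ℂ :=
  fun a b => y a * star (z b)

/-- Cauchy–Schwarz for the complex dot product. -/
lemma dot_cs {n : Type*} [Fintype n] (u v : n → ℂ) :
    ‖star u ⬝ᵥ v‖ ^ 2 ≤ (star u ⬝ᵥ u).re * (star v ⬝ᵥ v).re := by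
  set u' : EuclideanSpace ℂ n := (WithLp.equiv 2 (n → ℂ)).symm u
  set v' : EuclideanSpace ℂ n := (WithLp.equiv 2 (n → ℂ)).symm v
  have hi : ∀ w z : n → ℂ, (inner ℂ ((WithLp.equiv 2 (n → ℂ)).symm w)
      ((WithLp.equiv 2 (n → ℂ)).symm z) : ℂ) = star w ⬝ᵥ z := by
    intro w z
    simp [PiLp.inner_apply, dotProduct, mul_comm, RCLike.inner_apply]
  have h1 := norm_inner_le_norm (𝕜 := ℂ) u' v'
  have h2 : ‖(inner ℂ u' v' : ℂ)‖ ^ 2 ≤ (‖u'‖ * ‖v'‖) ^ 2 :=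
    pow_le_pow_left₀ (norm_nonneg _) h1 2
  calc ‖star u ⬝ᵥ v‖ ^ 2 = ‖(inner ℂ u' v' : ℂ)‖ ^ 2 := by
        rw [hi u v]
    _ ≤ (‖u'‖ * ‖v'‖) ^ 2 := h2
    _ = (star u ⬝ᵥ u).re * (star v ⬝ᵥ v).re := by
        rw [mul_pow, ← inner_self_eq_norm_sq (𝕜 := ℂ), ← inner_self_eq_norm_sq (𝕜 := ℂ),
          hi u u, hi v v]
        rfl

open scoped MatrixOrder in
/-- Cauchy–Schwarz for PSD quadratic forms. -/
lemma psd_cs {n : Type*} [Fintype n] [DecidableEq n] {M : Matrix n n ℂ} (hM : M.PosSemidef)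
    (x y : n → ℂ) :
    ‖star x ⬝ᵥ M *ᵥ y‖ ^ 2 ≤ (star x ⬝ᵥ M *ᵥ x).re * (star y ⬝ᵥ M *ᵥ y).re := by
  have key : ∀ z w : n → ℂ, star z ⬝ᵥ M *ᵥ w = star (CFC.sqrt M *ᵥ z) ⬝ᵥ (CFC.sqrt M *ᵥ w) := by
    intro z w
    conv_lhs => rw [← CFC.sqrt_mul_sqrt_self M hM.nonneg]
    rw [← mulVec_mulVec, dotProduct_mulVec, star_mulVec, (CFC.sqrt_nonneg M).posSemidef.1]
  rw [key x y, key x x, key y y]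
  exact dot_cs _ _

/-- Quadratic form of a Kronecker product factors. -/
lemma kron_quad {A B : Matrix (Fin 2) (Fin 2) ℂ} (x y z w : Fin 2 → ℂ) :
    star (vecTens x y) ⬝ᵥ (A ⊗ₖ B) *ᵥ vecTens z w
      = (star x ⬝ᵥ A *ᵥ z) * (star y ⬝ᵥ B *ᵥ w) := by
  simp only [vecTens, dotProduct, mulVec, kroneckerMap_apply, Pi.star_apply, star_mul',
    Fintype.sum_prod_type, dotProduct, Fin.sum_univ_two]
  ring

lemma vecTens_dot (x y z w : Fin 2 → ℂ) :
    star (vecTens x y) ⬝ᵥ vecTens z w = (star x ⬝ᵥ z) * (star y ⬝ᵥ w) := by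
  simp only [vecTens, dotProduct, Pi.star_apply, star_mul', Fintype.sum_prod_type,
    Fin.sum_univ_two]
  ring

lemma sum_mulVec' {m n : Type*} [Fintype n] {N : ℕ} (M : Fin N → Matrix m n ℂ) (v : n → ℂ) :
    (∑ j, M j) *ᵥ v = ∑ j, M j *ᵥ v := by
  ext i
  simp only [mulVec, dotProduct, Matrix.sum_apply, Finset.sum_apply, Finset.sum_mul]
  rw [Finset.sum_comm]

lemma dotProduct_sum' {n : Type*} [Fintype n] {N : ℕ} (u : n → ℂ) (v : Fin N → n → ℂ) :
    u ⬝ᵥ (∑ j, v j) = ∑ j, u ⬝ᵥ v j := by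
  simp only [dotProduct, Finset.sum_apply, Finset.mul_sum]
  rw [Finset.sum_comm]

/-- Matrix entries are bounded by the operator norm (for unit vectors). -/
lemma clm_bound {n : Type*} [Fintype n] [DecidableEq n] (M : Matrix n n ℂ) (u v : n → ℂ)
    (hu : star u ⬝ᵥ u = 1) (hv : star v ⬝ᵥ v = 1) :
    ‖star u ⬝ᵥ M *ᵥ v‖ ≤ ‖Matrix.toEuclideanCLM (𝕜 := ℂ) M‖ := by
  set u' : EuclideanSpace ℂ n := (WithLp.equiv 2 (n → ℂ)).symm u
  set v' : EuclideanSpace ℂ n := (WithLp.equiv 2 (n → ℂ)).symm v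
  have hi : ∀ w z : n → ℂ, (inner ℂ ((WithLp.equiv 2 (n → ℂ)).symm w)
      ((WithLp.equiv 2 (n → ℂ)).symm z) : ℂ) = star w ⬝ᵥ z := by
    intro w z
    simp [PiLp.inner_apply, dotProduct, mul_comm, RCLike.inner_apply]
  have hnu : ‖u'‖ = 1 := by
    have h2 := inner_self_eq_norm_sq (𝕜 := ℂ) u'
    rw [hi u u, hu, RCLike.one_re] at h2
    nlinarith [norm_nonneg u']
  have hnv : ‖v'‖ = 1 := by
    have h2 := inner_self_eq_norm_sq (𝕜 := ℂ) v'
    rw [hi v v, hv, RCLike.one_re] at h2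
    nlinarith [norm_nonneg v']
  have key : (inner ℂ u' (Matrix.toEuclideanCLM (𝕜 := ℂ) M v') : ℂ) = star u ⬝ᵥ M *ᵥ v := by
    have : Matrix.toEuclideanCLM (𝕜 := ℂ) M v' = (WithLp.equiv 2 (n → ℂ)).symm (M *ᵥ v) := by
      exact Matrix.toEuclideanCLM_toLp M v
    rw [this, hi]
  calc ‖star u ⬝ᵥ M *ᵥ v‖
      = ‖(inner ℂ u' (Matrix.toEuclideanCLM (𝕜 := ℂ) M v') : ℂ)‖ := by rw [key]
    _ ≤ ‖u'‖ * ‖Matrix.toEuclideanCLM (𝕜 := ℂ) M v'‖ := norm_inner_le_norm _ _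
    _ ≤ ‖u'‖ * (‖Matrix.toEuclideanCLM (𝕜 := ℂ) M‖ * ‖v'‖) := by
        gcongr; exact (Matrix.toEuclideanCLM (𝕜 := ℂ) M).le_opNorm v'
    _ = ‖Matrix.toEuclideanCLM (𝕜 := ℂ) M‖ := by rw [hnu, hnv]; ring

/-- key inequality for non-separability. If `T` is self-adjoint,
kills `ξ1⊗ξ2` and `ξ2⊗ξ1`, and has `⟨ξ2⊗ξ2, T ξ1⊗ξ1⟩ = α > 0`, then `T` is at
operator-norm distance at least `α/2` from every finite sum `Σ Aⱼ⊗Bⱼ` of products of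
positive operators; consequently `T` is not in the closure of such sums. -/
theorem key_nonseparability_inequality (ξ : Fin 2 → Fin 2 → ℂ)
    (hξ : ∀ i j, (∑ k, star (ξ i k) * ξ j k) = if i = j then 1 else 0)
    (T : Matrix (Fin 2 × Fin 2) (Fin 2 × Fin 2) ℂ) (hT : T.IsHermitian)
    (h12 : T.mulVec (vecTens (ξ 0) (ξ 1)) = 0)
    (h21 : T.mulVec (vecTens (ξ 1) (ξ 0)) = 0)
    (α : ℝ) (hα : 0 < α)
    (hmat : star (vecTens (ξ 1) (ξ 1)) ⬝ᵥ T.mulVec (vecTens (ξ 0) (ξ 0)) = (α : ℂ)) :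
    (∀ (N : ℕ) (A B : Fin N → Matrix (Fin 2) (Fin 2) ℂ),
        (∀ j, (A j).PosSemidef) → (∀ j, (B j).PosSemidef) →
        α / 2 ≤ ‖Matrix.toEuclideanCLM (𝕜 := ℂ) (T - ∑ j, A j ⊗ₖ B j)‖) ∧
      T ∉ closure {S : Matrix (Fin 2 × Fin 2) (Fin 2 × Fin 2) ℂ |
        ∃ (N : ℕ) (A B : Fin N → Matrix (Fin 2) (Fin 2) ℂ),
          (∀ j, (A j).PosSemidef) ∧ (∀ j, (B j).PosSemidef) ∧ S = ∑ j, A j ⊗ₖ B j} := by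
  have hdot : ∀ i j, star (ξ i) ⬝ᵥ ξ j = if i = j then 1 else 0 := by
    intro i j
    simpa [dotProduct] using hξ i j
  have hunit : ∀ i k, star (vecTens (ξ i) (ξ k)) ⬝ᵥ vecTens (ξ i) (ξ k) = 1 := by
    intro i k
    rw [vecTens_dot, hdot, hdot]
    simp
  have main : ∀ (N : ℕ) (A B : Fin N → Matrix (Fin 2) (Fin 2) ℂ),
      (∀ j, (A j).PosSemidef) → (∀ j, (B j).PosSemidef) →
      α / 2 ≤ ‖Matrix.toEuclideanCLM (𝕜 := ℂ) (T - ∑ j, A j ⊗ₖ B j)‖ := by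
    intro N A B hA hB
    set S : Matrix (Fin 2 × Fin 2) (Fin 2 × Fin 2) ℂ := ∑ j, A j ⊗ₖ B j with hSdef
    set ε : ℝ := ‖Matrix.toEuclideanCLM (𝕜 := ℂ) (T - S)‖ with hεdef
    -- real diagonal quantities
    have hreal : ∀ (M : Matrix (Fin 2) (Fin 2) ℂ), M.PosSemidef → ∀ x : Fin 2 → ℂ,
        0 ≤ (star x ⬝ᵥ M *ᵥ x).re ∧ star x ⬝ᵥ M *ᵥ x = ((star x ⬝ᵥ M *ᵥ x).re : ℂ) := by
      intro M hM x
      have h := hM.dotProduct_mulVec_nonneg x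
      rw [Complex.nonneg_iff] at h
      exact ⟨h.1, Complex.ext rfl (by simpa using h.2.symm)⟩
    set a0 : Fin N → ℝ := fun j => (star (ξ 0) ⬝ᵥ A j *ᵥ ξ 0).re with ha0
    set a1 : Fin N → ℝ := fun j => (star (ξ 1) ⬝ᵥ A j *ᵥ ξ 1).re with ha1
    set b0 : Fin N → ℝ := fun j => (star (ξ 0) ⬝ᵥ B j *ᵥ ξ 0).re with hb0
    set b1 : Fin N → ℝ := fun j => (star (ξ 1) ⬝ᵥ B j *ᵥ ξ 1).re with hb1
    set cA : Fin N → ℂ := fun j => star (ξ 1) ⬝ᵥ A j *ᵥ ξ 0 with hcA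
    set cB : Fin N → ℂ := fun j => star (ξ 1) ⬝ᵥ B j *ᵥ ξ 0 with hcB
    -- entries of S
    have hSentry : ∀ (i k i' k' : Fin 2),
        star (vecTens (ξ i) (ξ k)) ⬝ᵥ S *ᵥ vecTens (ξ i') (ξ k')
          = ∑ j, (star (ξ i) ⬝ᵥ A j *ᵥ ξ i') * (star (ξ k) ⬝ᵥ B j *ᵥ ξ k') := by
      intro i k i' k'
      rw [hSdef, sum_mulVec', dotProduct_sum']
      exact Finset.sum_congr rfl fun j _ => kron_quad _ _ _ _
    -- the operator-norm bound on entries of T - S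
    have hbound : ∀ (i k i' k' : Fin 2),
        ‖star (vecTens (ξ i) (ξ k)) ⬝ᵥ (T - S) *ᵥ vecTens (ξ i') (ξ k')‖ ≤ ε :=
      fun i k i' k' => clm_bound _ _ _ (hunit i k) (hunit i' k')
    -- diagonal bounds
    have hdiag01 : ∑ j, a0 j * b1 j ≤ ε := by
      have hz := hbound 0 1 0 1
      have hTz : (T - S) *ᵥ vecTens (ξ 0) (ξ 1) = -(S *ᵥ vecTens (ξ 0) (ξ 1)) := by
        rw [sub_mulVec, h12, zero_sub]
      have hval : star (vecTens (ξ 0) (ξ 1)) ⬝ᵥ S *ᵥ vecTens (ξ 0) (ξ 1)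
          = ((∑ j, a0 j * b1 j : ℝ) : ℂ) := by
        rw [hSentry]
        simp only [ha0, hb1]
        push_cast
        refine Finset.sum_congr rfl fun j _ => ?_
        rw [(hreal (A j) (hA j) (ξ 0)).2, (hreal (B j) (hB j) (ξ 1)).2]
        simp
      rw [hTz, dotProduct_neg, hval] at hz
      have h1 : |(∑ j, a0 j * b1 j)| ≤ ε := by
        have h2 := (Complex.abs_re_le_norm (-((∑ j, a0 j * b1 j : ℝ) : ℂ))).trans hz
        simpa using h2
      exact (le_abs_self _).trans h1
    have hdiag10 : ∑ j, a1 j * b0 j ≤ ε := by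
      have hz := hbound 1 0 1 0
      have hTz : (T - S) *ᵥ vecTens (ξ 1) (ξ 0) = -(S *ᵥ vecTens (ξ 1) (ξ 0)) := by
        rw [sub_mulVec, h21, zero_sub]
      have hval : star (vecTens (ξ 1) (ξ 0)) ⬝ᵥ S *ᵥ vecTens (ξ 1) (ξ 0)
          = ((∑ j, a1 j * b0 j : ℝ) : ℂ) := by
        rw [hSentry]
        simp only [ha1, hb0]
        push_cast
        refine Finset.sum_congr rfl fun j _ => ?_
        rw [(hreal (A j) (hA j) (ξ 1)).2, (hreal (B j) (hB j) (ξ 0)).2]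
        simp
      rw [hTz, dotProduct_neg, hval] at hz
      have h1 : |(∑ j, a1 j * b0 j)| ≤ ε := by
        have h2 := (Complex.abs_re_le_norm (-((∑ j, a1 j * b0 j : ℝ) : ℂ))).trans hz
        simpa using h2
      exact (le_abs_self _).trans h1
    -- corner bound
    have hcorner : α - ε ≤ ‖∑ j, cA j * cB j‖ := by
      have hz := hbound 1 1 0 0
      have hval : star (vecTens (ξ 1) (ξ 1)) ⬝ᵥ (T - S) *ᵥ vecTens (ξ 0) (ξ 0)
          = (α : ℂ) - ∑ j, cA j * cB j := by
        rw [sub_mulVec, dotProduct_sub, hmat, hSentry]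
      rw [hval] at hz
      have htri : (α : ℝ) ≤ ε + ‖∑ j, cA j * cB j‖ := by
        have : ‖(α : ℂ)‖ ≤ ‖(α : ℂ) - ∑ j, cA j * cB j‖
            + ‖∑ j, cA j * cB j‖ := by
          calc ‖(α : ℂ)‖
              = ‖((α : ℂ) - ∑ j, cA j * cB j) + ∑ j, cA j * cB j‖ := by ring_nf
            _ ≤ _ := norm_add_le _ _
        rw [Complex.norm_real, Real.norm_eq_abs, abs_of_pos hα] at this
        linarith
      linarith
    -- per-term Cauchy-Schwarz + AM-GM bound
    have hterm : ∀ j, ‖cA j * cB j‖ ≤ (a0 j * b1 j + a1 j * b0 j) / 2 := by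
      intro j
      have hcsA := psd_cs (hA j) (ξ 1) (ξ 0)
      have hcsB := psd_cs (hB j) (ξ 1) (ξ 0)
      have hA0 := (hreal (A j) (hA j) (ξ 0)).1
      have hA1 := (hreal (A j) (hA j) (ξ 1)).1
      have hB0 := (hreal (B j) (hB j) (ξ 0)).1
      have hB1 := (hreal (B j) (hB j) (ξ 1)).1
      simp only [hcA, hcB, ha0, ha1, hb0, hb1]
      rw [norm_mul]
      nlinarith [norm_nonneg (star (ξ 1) ⬝ᵥ A j *ᵥ ξ 0),
        norm_nonneg (star (ξ 1) ⬝ᵥ B j *ᵥ ξ 0),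
        sq_nonneg ((star (ξ 0) ⬝ᵥ A j *ᵥ ξ 0).re * (star (ξ 1) ⬝ᵥ B j *ᵥ ξ 1).re
          - (star (ξ 1) ⬝ᵥ A j *ᵥ ξ 1).re * (star (ξ 0) ⬝ᵥ B j *ᵥ ξ 0).re),
        sq_nonneg (‖star (ξ 1) ⬝ᵥ A j *ᵥ ξ 0‖
          * ‖star (ξ 1) ⬝ᵥ B j *ᵥ ξ 0‖),
        mul_nonneg hA0 hB1, mul_nonneg hA1 hB0]
    have hsum : ‖∑ j, cA j * cB j‖ ≤ ε := by
      calc ‖∑ j, cA j * cB j‖ ≤ ∑ j, ‖cA j * cB j‖ :=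
            norm_sum_le _ _
        _ ≤ ∑ j, (a0 j * b1 j + a1 j * b0 j) / 2 := Finset.sum_le_sum fun j _ => hterm j
        _ = ((∑ j, a0 j * b1 j) + ∑ j, a1 j * b0 j) / 2 := by
            rw [← Finset.sum_add_distrib, ← Finset.sum_div]
        _ ≤ (ε + ε) / 2 := by linarith
        _ = ε := by ring
    linarith
  refine ⟨main, ?_⟩
  intro hmem
  set L : Matrix (Fin 2 × Fin 2) (Fin 2 × Fin 2) ℂ →ₗ[ℂ]
      (EuclideanSpace ℂ (Fin 2 × Fin 2) →L[ℂ] EuclideanSpace ℂ (Fin 2 × Fin 2)) :=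
    { toFun := fun M => Matrix.toEuclideanCLM (𝕜 := ℂ) M
      map_add' := fun x y => map_add _ x y
      map_smul' := fun c x => map_smul (Matrix.toEuclideanCLM (𝕜 := ℂ)) c x } with hL
  have hLcont : Continuous L := L.continuous_of_finiteDimensional
  have hf : Continuous fun M : Matrix (Fin 2 × Fin 2) (Fin 2 × Fin 2) ℂ =>
      ‖Matrix.toEuclideanCLM (𝕜 := ℂ) (T - M)‖ := by
    have : (fun M : Matrix (Fin 2 × Fin 2) (Fin 2 × Fin 2) ℂ =>
        ‖Matrix.toEuclideanCLM (𝕜 := ℂ) (T - M)‖) = fun M => ‖L (T - M)‖ := rfl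
    rw [this]
    exact (hLcont.comp (continuous_const.sub continuous_id)).norm
  have hclosed : IsClosed {M : Matrix (Fin 2 × Fin 2) (Fin 2 × Fin 2) ℂ |
      α / 2 ≤ ‖Matrix.toEuclideanCLM (𝕜 := ℂ) (T - M)‖} :=
    isClosed_le continuous_const hf
  have hsub : {S : Matrix (Fin 2 × Fin 2) (Fin 2 × Fin 2) ℂ |
      ∃ (N : ℕ) (A B : Fin N → Matrix (Fin 2) (Fin 2) ℂ),
        (∀ j, (A j).PosSemidef) ∧ (∀ j, (B j).PosSemidef) ∧ S = ∑ j, A j ⊗ₖ B j}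
      ⊆ {M | α / 2 ≤ ‖Matrix.toEuclideanCLM (𝕜 := ℂ) (T - M)‖} := by
    rintro S ⟨N, A, B, hA, hB, rfl⟩
    exact main N A B hA hB
  have := closure_minimal hsub hclosed hmem
  simp only [Set.mem_setOf_eq, sub_self, map_zero, norm_zero] at this
  linarith
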